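/- W(2,8) > 1295; that is, there exists a coloring c : {1,…,1295} → {1,2} containing no monochromatic arithmetic progression of length 8. -/

import Mathlib

/-- `c` (viewed as a coloring of `{1,…,m}`) contains a monochromatic arithmetic
progression of length `l`: there are positive `a`, `d` with `a + (l-1)d ≤ m`
and `c (a) = c (a+d) = … = c (a+(l-1)d)`. -/
def ContainsAP (l m : ℕ) (c : ℕ → ℕ) : Prop :=
  ∃ a d : ℕ, 0 < a ∧ 0 < d ∧ a + (l - 1) * d ≤ m ∧
    ∀ j : ℕ, j ≤ l - 1 → c (a + j * d) = c a

/-- `c` is a coloring of `{1,…,m}` with colors in `{1,…,k}`. -/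
def IsColoring (k m : ℕ) (c : ℕ → ℕ) : Prop :=
  ∀ i : ℕ, 1 ≤ i → i ≤ m → 1 ≤ c i ∧ c i ≤ k

/-- The van der Waerden number `W k l`: the least positive `m` such that every
coloring of `{1,…,m}` with `k` colors contains a monochromatic arithmetic
progression of length `l`. -/
noncomputable def vdW (k l : ℕ) : ℕ :=
  sInf {m : ℕ | 0 < m ∧ ∀ c : ℕ → ℕ, IsColoring k m c → ContainsAP l m c}

/-! ### Auxiliary definitions for the explicit coloring -/

/-- The witness coloring, encoded as the bits of a 1295-bit number.
Bit `i-1` is 1 iff `i mod 653` is a nonzero quadratic non-residue mod 653. -/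
def Bw : ℕ := 222331268650954840333247193360208990185285946624279546899825449358974915350483425771428484463036515293722282004944900253105169544353997237996929986636369232935582486762902344458735578954133546510936196891225885690011869960823860493031423275331886156895542060670999228147880901066229293286859554774055518953517096087321592503701189488602174902789703960818855555436823871384531281509053311126

/-- The complement coloring on 1295 bits. -/
def Bc : ℕ := Bw ^^^ (2 ^ 1295 - 1)

/-- The explicit coloring function. -/
def cw (i : ℕ) : ℕ := if Bw.testBit (i - 1) then 2 else 1

/-- AND of the 8 shifts of `A` by multiples of `d`: bit `p` is set iff
`A` has an AP of 8 set bits starting at `p` with difference `d`. -/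
def apmask (A d : ℕ) : ℕ :=
  A &&& (A >>> d) &&& (A >>> (2*d)) &&& (A >>> (3*d)) &&& (A >>> (4*d)) &&&
    (A >>> (5*d)) &&& (A >>> (6*d)) &&& (A >>> (7*d))

set_option maxRecDepth 10000 in
lemma apmask_zero : ∀ dm < 184, apmask Bw (dm+1) = 0 ∧ apmask Bc (dm+1) = 0 := by decide +kernel

lemma cw_not_containsAP : ¬ ContainsAP 8 1295 cw := by
  rintro ⟨a, d, ha, hd, hle, hj⟩
  norm_num at hle hj
  -- bounds
  have hd184 : d - 1 < 184 := by omega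
  obtain ⟨hB0, hC0⟩ := apmask_zero (d - 1) hd184
  rw [show d - 1 + 1 = d by omega] at hB0 hC0
  have hposle : ∀ j : ℕ, j ≤ 7 → j * d + (a - 1) < 1295 := by
    intro j hj7
    have : j * d ≤ 7 * d := Nat.mul_le_mul_right d hj7
    omega
  by_cases hb : Bw.testBit (a - 1)
  · -- color 2 case
    have hca : cw a = 2 := by simp [cw, hb]
    have key : ∀ j : ℕ, j ≤ 7 → Bw.testBit (j * d + (a - 1)) = true := by
      intro j hj7
      have h1 := hj j hj7
      rw [hca] at h1
      rw [show j * d + (a - 1) = a + j * d - 1 by omega]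
      by_contra h2
      simp only [Bool.not_eq_true] at h2
      simp [cw, h2] at h1
    have k0 := key 0 (by norm_num); rw [zero_mul, zero_add] at k0
    have k1 := key 1 (by norm_num); rw [one_mul] at k1
    have k2 := key 2 (by norm_num)
    have k3 := key 3 (by norm_num)
    have k4 := key 4 (by norm_num)
    have k5 := key 5 (by norm_num)
    have k6 := key 6 (by norm_num)
    have k7 := key 7 (by norm_num)
    have : (apmask Bw d).testBit (a - 1) = true := by
      simp [apmask, Nat.testBit_land, Nat.testBit_shiftRight, k0, k1, k2, k3, k4, k5, k6, k7]
    rw [hB0, Nat.zero_testBit] at this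
    exact Bool.false_ne_true this
  · -- color 1 case
    have hbc : ∀ p : ℕ, p < 1295 → Bc.testBit p = !Bw.testBit p := by
      intro p hp
      simp [Bc, Nat.testBit_xor, Nat.testBit_two_pow_sub_one, hp]
    have hca : cw a = 1 := by simp [cw, hb]
    have key : ∀ j : ℕ, j ≤ 7 → Bc.testBit (j * d + (a - 1)) = true := by
      intro j hj7
      have h1 := hj j hj7
      rw [hca] at h1
      rw [hbc _ (hposle j hj7), show j * d + (a - 1) = a + j * d - 1 by omega]
      by_contra h2
      simp only [Bool.not_eq_true', Bool.not_eq_false] at h2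
      simp [cw, h2] at h1
    have k0 := key 0 (by norm_num); rw [zero_mul, zero_add] at k0
    have k1 := key 1 (by norm_num); rw [one_mul] at k1
    have k2 := key 2 (by norm_num)
    have k3 := key 3 (by norm_num)
    have k4 := key 4 (by norm_num)
    have k5 := key 5 (by norm_num)
    have k6 := key 6 (by norm_num)
    have k7 := key 7 (by norm_num)
    have : (apmask Bc d).testBit (a - 1) = true := by
      simp [apmask, Nat.testBit_land, Nat.testBit_shiftRight, k0, k1, k2, k3, k4, k5, k6, k7]
    rw [hC0, Nat.zero_testBit] at this
    exact Bool.false_ne_true this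

lemma cw_isColoring : IsColoring 2 1295 cw := by
  intro i _ _
  unfold cw
  split <;> omega

/-- Van der Waerden's theorem (for 2 colors, progressions of length 8),
deduced from the Hales–Jewett theorem via a compactness (ultrafilter) argument. -/
lemma vdw_set_nonempty :
    {m : ℕ | 0 < m ∧ ∀ c : ℕ → ℕ, IsColoring 2 m c → ContainsAP 8 m c}.Nonempty := by
  classical
  by_contra hne
  rw [Set.not_nonempty_iff_eq_empty, Set.eq_empty_iff_forall_notMem] at hne
  have h' : ∀ m : ℕ, ∃ c : ℕ → ℕ, IsColoring 2 (m+1) c ∧ ¬ ContainsAP 8 (m+1) c := by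
    intro m
    have := hne (m+1)
    simp only [Set.mem_setOf_eq, not_and] at this
    have h2 := this (Nat.succ_pos m)
    push_neg at h2
    exact h2
  choose g hg1 hg2 using h'
  set U : Ultrafilter ℕ := Ultrafilter.of Filter.cofinite with hUdef
  have hU : (U : Filter ℕ) ≤ Filter.cofinite := Ultrafilter.of_le _
  set val : ℕ → ℕ := fun p => if {m | g m p = 1} ∈ U then 1 else 2 with hvaldef
  have hval12 : ∀ p, val p = 1 ∨ val p = 2 := by
    intro p
    simp only [hvaldef]
    split <;> simp
  have hcof : ∀ p : ℕ, {m : ℕ | p ≤ m + 1} ∈ U := by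
    intro p
    apply hU
    rw [Filter.mem_cofinite]
    apply Set.Finite.subset (Set.finite_Iio p)
    intro m hm
    simp only [Set.mem_compl_iff, Set.mem_setOf_eq, not_le] at hm
    simp only [Set.mem_Iio]
    omega
  have hval : ∀ p : ℕ, 1 ≤ p → {m | g m p = val p} ∈ U := by
    intro p hp
    by_cases hm : {m | g m p = 1} ∈ U
    · have : {m | g m p = val p} = {m | g m p = 1} := by
        simp only [hvaldef, if_pos hm]
      rw [this]; exact hm
    · have hc : {m | g m p = 1}ᶜ ∈ U := Ultrafilter.compl_mem_iff_notMem.mpr hm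
      have heq : val p = 2 := by simp only [hvaldef, if_neg hm]
      rw [heq]
      have := Filter.inter_mem hc (hcof p)
      apply Filter.mem_of_superset this
      rintro m ⟨h1, h2⟩
      simp only [Set.mem_compl_iff, Set.mem_setOf_eq] at h1 h2 ⊢
      have := hg1 m p hp h2
      omega
  -- apply the Hales–Jewett consequence
  set S : Finset ℕ := Finset.image (· + 1) (Finset.range 8) with hSdef
  set C : ℕ → Fin 2 := fun n => if val n = 1 then 0 else 1 with hCdef
  obtain ⟨q, hq, b, k, hk⟩ := Combinatorics.exists_mono_homothetic_copy S C
  have hmemS : ∀ j : ℕ, j ≤ 7 → (j + 1) ∈ S := by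
    intro j hj
    simp only [hSdef, Finset.mem_image, Finset.mem_range]
    exact ⟨j, by omega, rfl⟩
  have hCeq : ∀ j : ℕ, j ≤ 7 → C (q * (j + 1) + b) = k := by
    intro j hj
    have := hk (j + 1) (hmemS j hj)
    simpa [smul_eq_mul] using this
  have hvaleq : ∀ j : ℕ, j ≤ 7 → val (q * (j + 1) + b) = val (q + b) := by
    intro j hj
    have h1 := hCeq j hj
    have h0 := hCeq 0 (by norm_num)
    rw [show q * (0 + 1) + b = q + b by ring] at h0
    rw [← h0] at h1
    rcases hval12 (q * (j + 1) + b) with hv | hv <;>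
      rcases hval12 (q + b) with hw | hw <;>
        simp [hCdef, hv, hw] at h1 ⊢
  -- gather the relevant ultrafilter sets
  have hpts : ∀ j : ℕ, j ≤ 7 → 1 ≤ q + b + j * q := by intro j _; omega
  have hbig : (⋂ j ∈ Finset.range 8, {m | g m (q + b + j * q) = val (q + b + j * q)}) ∈ U := by
    have : (⋂ j ∈ Finset.range 8, {m | g m (q + b + j * q) = val (q + b + j * q)}) ∈ (U : Filter ℕ) := by
      rw [Filter.biInter_finset_mem]
      intro j hjr
      simp only [Finset.mem_range] at hjr
      exact hval _ (hpts j (by omega))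
    exact this
  have hlen : {m : ℕ | q + b + 7 * q ≤ m + 1} ∈ U := hcof (q + b + 7 * q)
  obtain ⟨m, hm⟩ := Filter.nonempty_of_mem (Filter.inter_mem hbig hlen)
  obtain ⟨hm1, hm2⟩ := hm
  simp only [Set.mem_iInter, Set.mem_setOf_eq, Finset.mem_range] at hm1 hm2
  -- build the monochromatic AP for g m
  apply hg2 m
  refine ⟨q + b, q, by omega, hq, by norm_num; omega, ?_⟩
  intro j hj
  norm_num at hj
  have e1 : g m (q + b + j * q) = val (q + b + j * q) := hm1 j (by omega)
  have e2 : g m (q + b) = val (q + b) := by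
    have := hm1 0 (by omega)
    simpa using this
  rw [e1, e2]
  have := hvaleq j hj
  rw [show q * (j + 1) + b = q + b + j * q by ring] at this
  exact this

theorem vdW_two_eight_gt :
    vdW 2 8 > 1295 ∧
    ∃ c : ℕ → ℕ, IsColoring 2 1295 c ∧ ¬ ContainsAP 8 1295 c := by
  constructor
  · by_contra hle
    push_neg at hle
    have hmem := Nat.sInf_mem vdw_set_nonempty
    obtain ⟨hpos, hall⟩ := hmem
    have hc := hall cw ?_
    · obtain ⟨a, d, ha, hd, hle2, hj⟩ := hc
      exact cw_not_containsAP ⟨a, d, ha, hd, le_trans hle2 hle, hj⟩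
    · intro i h1 h2
      exact cw_isColoring i h1 (le_trans h2 hle)
  · exact ⟨cw, cw_isColoring, cw_not_containsAP⟩
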